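/- arXiv:math/0702581 — 3 statements merged into one kernel-verified Lean document; each statement's English description precedes it below -/
import Mathlib

section
/- Let x = (1,1), φ(z) = (z,z) the diagonal geodesic in Δ², and π_g(z₁,z₂) = (a z₁ + (1−a) z₂, a z₁ + (1−a) z₂) a linear holomorphic retraction onto the image of φ (a ∈ ℂ). Let γ(t) = (γ₁(t), γ₂(t)) be a curve in Δ² converging to (1,1) such that γ₁(t) → 1 non-tangentially (γ is g-restricted). Then K_{Δ²}(γ(t), π_g(γ(t))) → 0 as t → 1⁻ if and only if (1 − γ₂(t))/(1 − γ₁(t)) → 1 as t → 1⁻. -/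
open Filter Topology
open scoped ENNReal

noncomputable section

/-- The open unit disc in `ℂ`. -/
def disc : Set ℂ := {z : ℂ | ‖z‖ < 1}

/-- The bidisc `Δ²`. -/
def bidisc : Set (ℂ × ℂ) := disc ×ˢ disc

/-- The Poincaré distance on the unit disc (formula-wise on `ℂ`). -/
def pd (z w : ℂ) : ℝ :=
  (1/2) * Real.log ((1 + ‖(z - w) / (1 - (starRingEnd ℂ) z * w)‖) /
    (1 - ‖(z - w) / (1 - (starRingEnd ℂ) z * w)‖))

/-- The Kobayashi distance of the bidisc: max of Poincaré distances. -/
def kd (z w : ℂ × ℂ) : ℝ := max (pd z.1 w.1) (pd z.2 w.2)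

/-- The Stolz region of vertex `τ` and amplitude `M`. -/
def stolz (τ : ℂ) (M : ℝ) : Set ℂ :=
  {z ∈ disc | ‖τ - z‖ < M * (1 - ‖z‖)}

/-- `g` has non-tangential limit `L` at `τ ∈ ∂Δ`. -/
def NTlim (g : ℂ → ℂ) (τ L : ℂ) : Prop :=
  ∀ M > (1:ℝ), Tendsto g (nhdsWithin τ (stolz τ M)) (nhds L)

/-- The boundary dilation coefficient of `g` at `τ`, as an extended real. -/
def lamE (g : ℂ → ℂ) (τ : ℂ) : EReal :=
  Filter.liminf (fun z => (((1 - ‖g z‖) / (1 - ‖z‖) : ℝ) : EReal))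
    (nhdsWithin τ disc)

/-- Open horocycle of center `τ ∈ ∂Δ` and radius `R`. -/
def horo (τ : ℂ) (R : ℝ) : Set ℂ :=
  {z ∈ disc | ‖τ - z‖ ^ 2 / (1 - ‖z‖ ^ 2) < R}

/-- Closed horocycle of center `τ ∈ ∂Δ` and radius `R`. -/
def horoC (τ : ℂ) (R : ℝ) : Set ℂ :=
  {z ∈ disc | ‖τ - z‖ ^ 2 / (1 - ‖z‖ ^ 2) ≤ R}

/-- The Busemann sublevel set of radius `R` associated to the geodesic `φ`. -/
def busemannSub (φ : ℂ → ℂ × ℂ) (R : ℝ) : Set (ℂ × ℂ) :=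
  {x ∈ bidisc | ∃ L : ℝ,
    Tendsto (fun r : ℝ => kd x (φ (r : ℂ)) - kd (φ 0) (φ (r : ℂ)))
      (nhdsWithin 1 (Set.Iio 1)) (nhds L) ∧
    L ≤ (1/2) * Real.log R}

/-- Small horosphere of center `y ∈ ∂Δ²` and radius `R`. -/
def smallHoro (y : ℂ × ℂ) (R : ℝ) : Set (ℂ × ℂ) :=
  {z ∈ bidisc |
    Filter.limsup (fun w => ((kd z w - kd 0 w : ℝ) : EReal)) (nhdsWithin y bidisc) <
      (((1/2) * Real.log R : ℝ) : EReal)}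

/-- Big horosphere of center `y ∈ ∂Δ²` and radius `R`. -/
def bigHoro (y : ℂ × ℂ) (R : ℝ) : Set (ℂ × ℂ) :=
  {z ∈ bidisc |
    Filter.liminf (fun w => ((kd z w - kd 0 w : ℝ) : EReal)) (nhdsWithin y bidisc) <
      (((1/2) * Real.log R : ℝ) : EReal)}

/-- The g-Koranyi region of amplitude `M` associated to the geodesic `φ`. -/
def koranyi (φ : ℂ → ℂ × ℂ) (M : ℝ) : Set (ℂ × ℂ) :=
  {z ∈ bidisc | ∃ L : ℝ,
    Tendsto (fun r : ℝ => kd z (φ (r : ℂ)) - kd (φ 0) (φ (r : ℂ)))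
      (nhdsWithin 1 (Set.Iio 1)) (nhds L) ∧
    L + kd (φ 0) z < Real.log M}

/-- A continuous curve in `Δ²` converging to `x` as `t → 1⁻`. -/
def xcurve (σ : ℝ → ℂ × ℂ) (x : ℂ × ℂ) : Prop :=
  ContinuousOn σ (Set.Ico 0 1) ∧ (∀ t ∈ Set.Ico (0:ℝ) 1, σ t ∈ bidisc) ∧
    Tendsto σ (nhdsWithin 1 (Set.Iio 1)) (nhds x)

/-- A curve in `Δ` converging non-tangentially to `τ ∈ ∂Δ`. -/
def NTcurve (w : ℝ → ℂ) (τ : ℂ) : Prop :=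
  Tendsto w (nhdsWithin 1 (Set.Iio 1)) (nhds τ) ∧
    ∃ M : ℝ, ∀ᶠ t in nhdsWithin (1:ℝ) (Set.Iio 1),
      ‖τ - w t‖ ≤ M * (1 - ‖w t‖)

/-- Horocycle with possibly infinite coefficient / interior center:
`E_Δ(τ, lam·R)`, with the convention that it is all of `Δ` when `τ` is interior
or the coefficient is infinite. -/
def horoE (τ : ℂ) (lam : ℝ≥0∞) (R : ℝ) : Set ℂ :=
  if ‖τ‖ = 1 ∧ lam ≠ ⊤ then
    {z ∈ disc | ‖τ - z‖ ^ 2 / (1 - ‖z‖ ^ 2) < lam.toReal * R}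
  else disc

/-- `(1/2) log` of the `φ_g`-boundary dilation coefficient of `f` at `x` (as an
extended real, via `limsup` along the radius). -/
def lamPhi (f : ℂ × ℂ → ℂ) (g : ℂ → ℂ) (x1 : ℂ) : EReal :=
  Filter.limsup
    (fun t : ℝ =>
      ((kd 0 ((t : ℂ) * x1, g ((t : ℂ) * x1)) -
          pd 0 (f ((t : ℂ) * x1, g ((t : ℂ) * x1))) : ℝ) : EReal))
    (nhdsWithin 1 (Set.Iio 1))

/-- `(1/2) log` of Abate's boundary dilation coefficient of `f` at `x`. -/
def alphaF (f : ℂ × ℂ → ℂ) (x : ℂ × ℂ) : EReal :=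
  Filter.liminf (fun w => ((kd 0 w - pd 0 (f w) : ℝ) : EReal)) (nhdsWithin x bidisc)

/-- `τ ∈ ∂Δ²` is a generalized Wolff point of `f`: some complex geodesic through
`τ` has all its Busemann sublevel sets `f`-invariant. -/
def GenWolff (f : ℂ × ℂ → ℂ × ℂ) (τ : ℂ × ℂ) : Prop :=
  τ ∈ frontier bidisc ∧
  ∃ φ : ℂ → ℂ × ℂ, Set.MapsTo φ disc bidisc ∧
    (∀ z ∈ disc, ∀ w ∈ disc, kd (φ z) (φ w) = pd z w) ∧
    τ ∈ closure (φ '' disc) ∧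
    ∀ R > (0:ℝ), Set.MapsTo f (busemannSub φ R) (busemannSub φ R)

end

open Filter Topology

lemma normSq_diff_identity (z w : ℂ) :
    Complex.normSq (1 - (starRingEnd ℂ) z * w) - Complex.normSq (z - w)
      = (1 - Complex.normSq z) * (1 - Complex.normSq w) := by
  simp only [Complex.normSq_apply, Complex.mul_re, Complex.mul_im, Complex.sub_re,
    Complex.sub_im, Complex.one_re, Complex.one_im, Complex.conj_re, Complex.conj_im]
  ring

lemma abs_sub_lt_abs_one_sub {z w : ℂ} (hz : ‖z‖ < 1) (hw : ‖w‖ < 1) :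
    ‖z - w‖ < ‖1 - (starRingEnd ℂ) z * w‖ := by
  have h1 : Complex.normSq z < 1 := by
    rw [Complex.normSq_eq_norm_sq]; nlinarith [norm_nonneg z]
  have h2 : Complex.normSq w < 1 := by
    rw [Complex.normSq_eq_norm_sq]; nlinarith [norm_nonneg w]
  have key := normSq_diff_identity z w
  have h3 : Complex.normSq (z - w) < Complex.normSq (1 - (starRingEnd ℂ) z * w) := by
    nlinarith [Complex.normSq_nonneg z, Complex.normSq_nonneg w]
  rw [← Complex.sq_norm, ← Complex.sq_norm] at h3
  exact lt_of_pow_lt_pow_left₀ 2 (norm_nonneg _) h3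

lemma one_sub_abs_mul_le {z w : ℂ} :
    1 - ‖z‖ * ‖w‖ ≤ ‖1 - (starRingEnd ℂ) z * w‖ := by
  have := norm_sub_norm_le (1 : ℂ) ((starRingEnd ℂ) z * w)
  simpa using this

lemma abs_one_sub_le {z w : ℂ} (hz : ‖z‖ ≤ 1) :
    ‖1 - (starRingEnd ℂ) z * w‖ ≤ 2 * (1 - ‖z‖) + ‖z - w‖ := by
  have hsplit : (1 : ℂ) - (starRingEnd ℂ) z * w
      = (1 - (starRingEnd ℂ) z * z) + (starRingEnd ℂ) z * (z - w) := by ring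
  have h1 : (starRingEnd ℂ) z * z = (Complex.normSq z : ℂ) := by
    rw [mul_comm]; exact Complex.mul_conj z
  have h2 : ‖1 - (starRingEnd ℂ) z * z‖ = 1 - Complex.normSq z := by
    rw [h1]
    have : ((1 : ℝ) : ℂ) - (Complex.normSq z : ℂ) = ((1 - Complex.normSq z : ℝ) : ℂ) := by push_cast; ring
    rw [show (1:ℂ) = ((1:ℝ):ℂ) by norm_num, this, Complex.norm_real, Real.norm_eq_abs]
    apply _root_.abs_of_nonneg
    rw [Complex.normSq_eq_norm_sq]; nlinarith [norm_nonneg z]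
  calc ‖1 - (starRingEnd ℂ) z * w‖
      ≤ ‖1 - (starRingEnd ℂ) z * z‖ + ‖(starRingEnd ℂ) z * (z - w)‖ := by
        rw [hsplit]; exact norm_add_le _ _
    _ ≤ 2 * (1 - ‖z‖) + ‖z - w‖ := by
        rw [h2, norm_mul, Complex.norm_conj]
        have : Complex.normSq z = ‖z‖ ^ 2 := Complex.normSq_eq_norm_sq z
        nlinarith [norm_nonneg z, norm_nonneg (z - w)]

lemma abs_one_sub_comm (z w : ℂ) :
    ‖1 - (starRingEnd ℂ) z * w‖ = ‖1 - (starRingEnd ℂ) w * z‖ := by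
  rw [← Complex.norm_conj (1 - (starRingEnd ℂ) z * w)]
  congr 1
  simp [map_sub, map_mul]
  ring


lemma a_real (a : ℂ)
    (hmaps : Set.MapsTo
      (fun z : ℂ × ℂ => (a * z.1 + (1 - a) * z.2, a * z.1 + (1 - a) * z.2)) bidisc bidisc) :
    a.im = 0 ∧ 0 ≤ a.re ∧ a.re ≤ 1 := by
  have key : ‖a‖ + ‖1 - a‖ ≤ 1 := by
    by_contra hc
    push_neg at hc
    have ha : a ≠ 0 := by rintro rfl; simp at hc
    have ha1 : (1 : ℂ) - a ≠ 0 := by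
      intro h
      have : a = 1 := by linear_combination -h
      rw [this] at hc; simp at hc
    set s : ℝ := ‖a‖ + ‖1 - a‖ with hs
    have hspos : 0 < s := by positivity
    set r : ℝ := 1 / s with hr
    have hr01 : 0 < r ∧ r < 1 := by
      constructor
      · positivity
      · rw [hr]; rw [div_lt_one hspos]; exact hc
    set z₁ : ℂ := (r : ℂ) * (starRingEnd ℂ) a / (‖a‖ : ℂ) with hz1
    set z₂ : ℂ := (r : ℂ) * (starRingEnd ℂ) (1 - a) / (‖1 - a‖ : ℂ) with hz2
    have habs1 : ‖z₁‖ < 1 := by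
      rw [hz1, norm_div, norm_mul, Complex.norm_conj, Complex.norm_real, Real.norm_eq_abs, Complex.norm_real, Real.norm_eq_abs,
        abs_of_nonneg hr01.1.le, abs_of_nonneg (norm_nonneg a),
        mul_div_assoc, div_self (norm_ne_zero_iff.mpr ha), mul_one]
      exact hr01.2
    have habs2 : ‖z₂‖ < 1 := by
      rw [hz2, norm_div, norm_mul, Complex.norm_conj, Complex.norm_real, Real.norm_eq_abs, Complex.norm_real, Real.norm_eq_abs,
        abs_of_nonneg hr01.1.le, abs_of_nonneg (norm_nonneg _),
        mul_div_assoc, div_self (norm_ne_zero_iff.mpr ha1), mul_one]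
      exact hr01.2
    have hmem : ((z₁, z₂) : ℂ × ℂ) ∈ bidisc := ⟨habs1, habs2⟩
    have : ‖a * z₁ + (1 - a) * z₂‖ < 1 := (hmaps hmem).1
    have heq : a * z₁ + (1 - a) * z₂ = ((r * s : ℝ) : ℂ) := by
      rw [hz1, hz2]
      have e1 : a * ((r : ℂ) * (starRingEnd ℂ) a / (‖a‖ : ℂ))
          = (r : ℂ) * (‖a‖ : ℂ) := by
        rw [mul_div_assoc', div_eq_iff (by exact_mod_cast norm_ne_zero_iff.mpr ha),
          show a * ((r : ℂ) * (starRingEnd ℂ) a) = (r : ℂ) * (a * (starRingEnd ℂ) a) by ring,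
          Complex.mul_conj, Complex.normSq_eq_norm_sq]
        push_cast
        ring
      have e2 : (1 - a) * ((r : ℂ) * (starRingEnd ℂ) (1 - a) / (‖1 - a‖ : ℂ))
          = (r : ℂ) * (‖1 - a‖ : ℂ) := by
        rw [mul_div_assoc', div_eq_iff (by exact_mod_cast norm_ne_zero_iff.mpr ha1),
          show (1 - a) * ((r : ℂ) * (starRingEnd ℂ) (1 - a))
            = (r : ℂ) * ((1 - a) * (starRingEnd ℂ) (1 - a)) by ring,
          Complex.mul_conj, Complex.normSq_eq_norm_sq]
        push_cast
        ring
      rw [e1, e2, hs]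
      push_cast
      ring
    rw [heq, Complex.norm_real, Real.norm_eq_abs, _root_.abs_of_nonneg (by positivity), hr, one_div,
      inv_mul_cancel₀ hspos.ne'] at this
    exact lt_irrefl 1 this
  have hre1 : a.re ≤ ‖a‖ := Complex.re_le_norm a
  have hre2 : 1 - a.re ≤ ‖1 - a‖ := by
    simpa using Complex.re_le_norm (1 - a)
  have heq1 : ‖a‖ = a.re := by linarith
  have him : a.im = 0 := by
    have h2 : ‖a‖ ^ 2 = a.re ^ 2 + a.im ^ 2 := by
      rw [Complex.sq_norm, Complex.normSq_apply]; ring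
    rw [heq1] at h2
    have h3 : a.im ^ 2 = 0 := by nlinarith
    exact pow_eq_zero_iff (by norm_num) |>.mp h3
  refine ⟨him, by rw [← heq1]; exact norm_nonneg a, ?_⟩
  nlinarith [norm_nonneg (1 - a)]


lemma tendsto_pd_aux {l : Filter ℝ} {ρ : ℝ → ℝ} (h : Tendsto ρ l (nhds 0)) :
    Tendsto (fun t => (1/2 : ℝ) * Real.log ((1 + ρ t) / (1 - ρ t))) l (nhds 0) := by
  have hc : Tendsto (fun _ : ℝ => (1:ℝ)) l (nhds 1) := tendsto_const_nhds
  have h1 : Tendsto (fun t => (1 + ρ t) / (1 - ρ t)) l (nhds 1) := by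
    have := (hc.add h).div (hc.sub h) (by norm_num : (1:ℝ) - 0 ≠ 0)
    simpa [Pi.div_def] using this
  have h2 := (Real.continuousAt_log one_ne_zero).tendsto.comp h1
  have h3 := h2.const_mul (1/2 : ℝ)
  simpa [Function.comp, Real.log_one] using h3

lemma tendsto_rho_aux {l : Filter ℝ} {ρ : ℝ → ℝ} (h0 : ∀ᶠ t in l, 0 ≤ ρ t ∧ ρ t < 1)
    (h : Tendsto (fun t => (1/2 : ℝ) * Real.log ((1 + ρ t) / (1 - ρ t))) l (nhds 0)) :
    Tendsto ρ l (nhds 0) := by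
  have hmul : Tendsto (fun t => Real.log ((1 + ρ t) / (1 - ρ t))) l (nhds 0) := by
    have := h.const_mul (2 : ℝ)
    simp only [mul_zero] at this
    refine this.congr fun t => ?_
    ring
  have hexp : Tendsto (fun t => Real.exp (Real.log ((1 + ρ t) / (1 - ρ t)))) l (nhds 1) := by
    have := (Real.continuous_exp.tendsto 0).comp hmul
    simpa [Function.comp_def, Real.exp_zero] using this
  have key : ρ =ᶠ[l] fun t => (Real.exp (Real.log ((1 + ρ t) / (1 - ρ t))) - 1) /
      (Real.exp (Real.log ((1 + ρ t) / (1 - ρ t))) + 1) := by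
    filter_upwards [h0] with t ht
    obtain ⟨h0t, h1t⟩ := ht
    have hne : (1 : ℝ) - ρ t ≠ 0 := by linarith
    have hpos : 0 < (1 + ρ t) / (1 - ρ t) := div_pos (by linarith) (by linarith)
    show ρ t = _
    rw [Real.exp_log hpos, div_sub_one hne, div_add_one hne,
      show 1 + ρ t - (1 - ρ t) = 2 * ρ t by ring, show 1 + ρ t + (1 - ρ t) = 2 by ring]
    rw [div_div_div_eq]
    field_simp
  have h2 : Tendsto (fun t => (Real.exp (Real.log ((1 + ρ t) / (1 - ρ t))) - 1) /
      (Real.exp (Real.log ((1 + ρ t) / (1 - ρ t))) + 1)) l (nhds 0) := by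
    have := (hexp.sub (tendsto_const_nhds : Tendsto (fun _ : ℝ => (1:ℝ)) l (nhds 1))).div
      (hexp.add tendsto_const_nhds) (by norm_num : (1:ℝ) + 1 ≠ 0)
    simpa [Pi.div_def] using this
  exact h2.congr' key.symm

lemma rho_le (α : ℝ) (h0 : 0 ≤ α) (h1 : α ≤ 1) (z w p : ℂ)
    (hz : ‖z‖ < 1) (hw : ‖w‖ < 1) (hpd : ‖p‖ < 1)
    (hp : p = (α : ℂ) * z + (1 - (α : ℂ)) * w) :
    ‖(z - p) / (1 - (starRingEnd ℂ) z * p)‖ ≤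
        ‖z - w‖ / (1 - ‖z‖) ∧
      ‖(w - p) / (1 - (starRingEnd ℂ) w * p)‖ ≤
        ‖z - w‖ / (1 - ‖z‖) := by
  have hd : 0 < 1 - ‖z‖ := by linarith
  have hzp : ‖z - p‖ = (1 - α) * ‖z - w‖ := by
    have : z - p = ((1 - α : ℝ) : ℂ) * (z - w) := by rw [hp]; push_cast; ring
    rw [this, norm_mul, Complex.norm_real, Real.norm_eq_abs, _root_.abs_of_nonneg (by linarith)]
  have hwp : ‖w - p‖ = α * ‖z - w‖ := by
    have : w - p = ((α : ℝ) : ℂ) * (w - z) := by rw [hp]; push_cast; ring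
    rw [this, norm_mul, Complex.norm_real, Real.norm_eq_abs, _root_.abs_of_nonneg h0, norm_sub_rev]
  have hD1 : 1 - ‖z‖ ≤ ‖1 - (starRingEnd ℂ) z * p‖ := by
    have h2 := one_sub_abs_mul_le (z := z) (w := p)
    nlinarith [norm_nonneg z]
  have hD1pos : 0 < ‖1 - (starRingEnd ℂ) z * p‖ := lt_of_lt_of_le hd hD1
  have habsp : ‖p‖ ≤ α * ‖z‖ + (1 - α) * ‖w‖ := by
    rw [hp]
    calc ‖(α : ℂ) * z + (1 - (α : ℂ)) * w‖
        ≤ ‖(α : ℂ) * z‖ + ‖(1 - (α : ℂ)) * w‖ := norm_add_le _ _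
      _ = α * ‖z‖ + (1 - α) * ‖w‖ := by
          rw [norm_mul, norm_mul, Complex.norm_real, Real.norm_eq_abs, _root_.abs_of_nonneg h0,
            show (1 : ℂ) - (α : ℂ) = ((1 - α : ℝ) : ℂ) by push_cast; ring,
            Complex.norm_real, Real.norm_eq_abs, _root_.abs_of_nonneg (by linarith)]
  have hD2 : α * (1 - ‖z‖) ≤ ‖1 - (starRingEnd ℂ) w * p‖ := by
    have h2 := one_sub_abs_mul_le (z := w) (w := p)
    nlinarith [norm_nonneg w, norm_nonneg p]
  have hD2pos : 0 < ‖1 - (starRingEnd ℂ) w * p‖ := by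
    have h2 := one_sub_abs_mul_le (z := w) (w := p)
    nlinarith [norm_nonneg w, norm_nonneg p]
  constructor
  · rw [norm_div, hzp]
    apply div_le_div₀ (by positivity) _ hd hD1
    nlinarith [norm_nonneg (z - w)]
  · rw [norm_div, hwp, div_le_div_iff₀ hD2pos hd]
    calc α * ‖z - w‖ * (1 - ‖z‖)
        = ‖z - w‖ * (α * (1 - ‖z‖)) := by ring
      _ ≤ ‖z - w‖ * ‖1 - (starRingEnd ℂ) w * p‖ :=
          mul_le_mul_of_nonneg_left hD2 (norm_nonneg _)

lemma main_ineq (α : ℝ) (h0 : 0 ≤ α) (h1 : α ≤ 1) (z w p : ℂ)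
    (hz : ‖z‖ < 1) (hw : ‖w‖ < 1) (hpd : ‖p‖ < 1)
    (hp : p = (α : ℂ) * z + (1 - (α : ℂ)) * w)
    (hs : ‖(z - p) / (1 - (starRingEnd ℂ) z * p)‖ +
        ‖(w - p) / (1 - (starRingEnd ℂ) w * p)‖ ≤ 1/6) :
    ‖(1 - w) / (1 - z) - 1‖ ≤
      4 * (‖(z - p) / (1 - (starRingEnd ℂ) z * p)‖ +
        ‖(w - p) / (1 - (starRingEnd ℂ) w * p)‖) := by
  set ρ₁ := ‖(z - p) / (1 - (starRingEnd ℂ) z * p)‖ with hρ1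
  set ρ₂ := ‖(w - p) / (1 - (starRingEnd ℂ) w * p)‖ with hρ2
  set X := ‖z - w‖ with hX
  set d := 1 - ‖z‖ with hdd
  have hd : 0 < d := by rw [hdd]; linarith
  have hXnn : 0 ≤ X := norm_nonneg _
  have hρ1nn : 0 ≤ ρ₁ := norm_nonneg _
  have hρ2nn : 0 ≤ ρ₂ := norm_nonneg _
  have hzp : ‖z - p‖ = (1 - α) * X := by
    have : z - p = ((1 - α : ℝ) : ℂ) * (z - w) := by rw [hp]; push_cast; ring
    rw [this, norm_mul, Complex.norm_real, Real.norm_eq_abs, _root_.abs_of_nonneg (by linarith)]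
  have hwp : ‖w - p‖ = α * X := by
    have : w - p = ((α : ℝ) : ℂ) * (w - z) := by rw [hp]; push_cast; ring
    rw [this, norm_mul, Complex.norm_real, Real.norm_eq_abs, _root_.abs_of_nonneg h0, norm_sub_rev]
  have hD1pos : 0 < ‖1 - (starRingEnd ℂ) z * p‖ := by
    have h2 := one_sub_abs_mul_le (z := z) (w := p)
    nlinarith [norm_nonneg z]
  have hD2pos : 0 < ‖1 - (starRingEnd ℂ) w * p‖ := by
    have h2 := one_sub_abs_mul_le (z := w) (w := p)
    nlinarith [norm_nonneg w, norm_nonneg p]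
  have he1 : ‖z - p‖ = ρ₁ * ‖1 - (starRingEnd ℂ) z * p‖ := by
    rw [hρ1, norm_div, div_mul_cancel₀ _ hD1pos.ne']
  have he2 : ‖w - p‖ = ρ₂ * ‖1 - (starRingEnd ℂ) w * p‖ := by
    rw [hρ2, norm_div, div_mul_cancel₀ _ hD2pos.ne']
  -- bound on D1
  have hD1le : ‖1 - (starRingEnd ℂ) z * p‖ ≤ 2 * d + (1 - α) * X := by
    have := abs_one_sub_le (z := z) (w := p) hz.le
    rw [hzp] at this
    linarith
  -- bound on D2
  have hpz : ‖z‖ - ‖p‖ ≤ (1 - α) * X := by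
    have h3 : ‖z‖ - ‖p‖ ≤ ‖z - p‖ := by
      have := norm_sub_norm_le z p
      simpa using this
    linarith [hzp ▸ h3]
  have hD2le : ‖1 - (starRingEnd ℂ) w * p‖ ≤ 2 * (d + X) + α * X := by
    rw [abs_one_sub_comm]
    have h4 := abs_one_sub_le (z := p) (w := w) hpd.le
    have h5 : ‖p - w‖ = α * X := by rw [norm_sub_rev]; exact hwp
    have h6 : 1 - ‖p‖ ≤ d + (1 - α) * X := by rw [hdd]; linarith
    nlinarith
  -- the combined inequality
  have hXle : X ≤ 4 * (ρ₁ + ρ₂) * d := by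
    have hb1 : (1 - α) * X ≤ ρ₁ * (2 * d + (1 - α) * X) := by
      calc (1 - α) * X = ρ₁ * ‖1 - (starRingEnd ℂ) z * p‖ := by rw [← hzp, he1]
        _ ≤ ρ₁ * (2 * d + (1 - α) * X) := mul_le_mul_of_nonneg_left hD1le hρ1nn
    have hb2 : α * X ≤ ρ₂ * (2 * (d + X) + α * X) := by
      calc α * X = ρ₂ * ‖1 - (starRingEnd ℂ) w * p‖ := by rw [← hwp, he2]
        _ ≤ ρ₂ * (2 * (d + X) + α * X) := mul_le_mul_of_nonneg_left hD2le hρ2nn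
    nlinarith [mul_nonneg hρ1nn hXnn, mul_nonneg hρ2nn hXnn, mul_nonneg hρ1nn hd.le,
      mul_nonneg hρ2nn hd.le, mul_nonneg (mul_nonneg hρ1nn hXnn) h0,
      mul_nonneg (mul_nonneg hρ2nn hXnn) h0]
  have hz1 : (1 : ℂ) - z ≠ 0 := by
    intro hc
    have : z = 1 := by linear_combination -hc
    rw [this] at hz; simp at hz
  have hr : (1 - w) / (1 - z) - 1 = (z - w) / (1 - z) := by
    field_simp
    ring
  rw [hr, norm_div]
  have habs1z : d ≤ ‖1 - z‖ := by
    have := norm_sub_norm_le (1 : ℂ) z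
    simp only [norm_one] at this
    rw [hdd]; simpa using this
  have h7 : ‖z - w‖ / ‖1 - z‖ ≤ X / d :=
    div_le_div₀ hXnn (le_of_eq hX.symm) hd habs1z
  calc ‖z - w‖ / ‖1 - z‖ ≤ X / d := h7
    _ ≤ 4 * (ρ₁ + ρ₂) := by rw [div_le_iff₀ hd]; linarith

lemma rho_lt_one {z w : ℂ} (hz : ‖z‖ < 1) (hw : ‖w‖ < 1) :
    ‖(z - w) / (1 - (starRingEnd ℂ) z * w)‖ < 1 := by
  rw [norm_div]
  have hpos : 0 < ‖1 - (starRingEnd ℂ) z * w‖ := by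
    have := one_sub_abs_mul_le (z := z) (w := w)
    nlinarith [norm_nonneg z, norm_nonneg w]
  rw [div_lt_one hpos]
  exact abs_sub_lt_abs_one_sub hz hw

/-- Pseudo-hyperbolic distance from `γ₁` to the retraction point, along the curve. -/
noncomputable def R1 (a : ℂ) (γ : ℝ → ℂ × ℂ) (t : ℝ) : ℝ :=
  ‖((γ t).1 - (a * (γ t).1 + (1 - a) * (γ t).2)) /
    (1 - (starRingEnd ℂ) (γ t).1 * (a * (γ t).1 + (1 - a) * (γ t).2))‖

/-- Pseudo-hyperbolic distance from `γ₂` to the retraction point, along the curve. -/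
noncomputable def R2 (a : ℂ) (γ : ℝ → ℂ × ℂ) (t : ℝ) : ℝ :=
  ‖((γ t).2 - (a * (γ t).1 + (1 - a) * (γ t).2)) /
    (1 - (starRingEnd ℂ) (γ t).2 * (a * (γ t).1 + (1 - a) * (γ t).2))‖

/-- for a linear retraction onto the diagonal geodesic of `Δ²`, a
restricted `(1,1)`-curve is special iff `(1-γ₂)/(1-γ₁) → 1`. -/
theorem special_iff_ratio_tendsto_one
    (a : ℂ) (γ : ℝ → ℂ × ℂ) (hγ : xcurve γ (1, 1))
    (hres : NTcurve (fun t => (γ t).1) 1)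
    (hmaps : Set.MapsTo
      (fun z : ℂ × ℂ => (a * z.1 + (1 - a) * z.2, a * z.1 + (1 - a) * z.2)) bidisc bidisc) :
    Tendsto
        (fun t => kd (γ t)
          (a * (γ t).1 + (1 - a) * (γ t).2, a * (γ t).1 + (1 - a) * (γ t).2))
        (nhdsWithin 1 (Set.Iio 1)) (nhds 0) ↔
      Tendsto (fun t => (1 - (γ t).2) / (1 - (γ t).1))
        (nhdsWithin 1 (Set.Iio 1)) (nhds 1) := by
  obtain ⟨him, h0a, h1a⟩ := a_real a hmaps
  have ha : a = ((a.re : ℝ) : ℂ) := Complex.ext (Complex.ofReal_re a.re).symm (by simp [him])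
  set l := nhdsWithin (1:ℝ) (Set.Iio (1:ℝ)) with hldef
  have hmem : ∀ᶠ t in l, t ∈ Set.Ioo (0:ℝ) 1 :=
    Ioo_mem_nhdsLT_of_mem (by constructor <;> norm_num)
  have hbid : ∀ᶠ t in l, (γ t) ∈ bidisc := by
    filter_upwards [hmem] with t ht
    exact hγ.2.1 t ⟨ht.1.le, ht.2⟩
  have hz : ∀ᶠ t in l, ‖(γ t).1‖ < 1 := hbid.mono fun t ht => ht.1
  have hw : ∀ᶠ t in l, ‖(γ t).2‖ < 1 := hbid.mono fun t ht => ht.2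
  have hpd : ∀ᶠ t in l, ‖a * (γ t).1 + (1 - a) * (γ t).2‖ < 1 := by
    filter_upwards [hbid] with t ht
    exact (hmaps ht).1
  have hpform : ∀ t : ℝ, a * (γ t).1 + (1 - a) * (γ t).2
      = ((a.re : ℝ) : ℂ) * (γ t).1 + (1 - ((a.re : ℝ) : ℂ)) * (γ t).2 := by
    intro t
    rw [← ha]
  have hkd : (fun t => kd (γ t)
      (a * (γ t).1 + (1 - a) * (γ t).2, a * (γ t).1 + (1 - a) * (γ t).2))
      = fun t => max ((1/2 : ℝ) * Real.log ((1 + R1 a γ t) / (1 - R1 a γ t)))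
        ((1/2 : ℝ) * Real.log ((1 + R2 a γ t) / (1 - R2 a γ t))) := rfl
  rw [hkd]
  have hR1nn : ∀ t, 0 ≤ R1 a γ t := fun t => norm_nonneg _
  have hR2nn : ∀ t, 0 ≤ R2 a γ t := fun t => norm_nonneg _
  have hR1lt : ∀ᶠ t in l, R1 a γ t < 1 := by
    filter_upwards [hz, hpd] with t h1 h3
    exact rho_lt_one h1 h3
  have hR2lt : ∀ᶠ t in l, R2 a γ t < 1 := by
    filter_upwards [hw, hpd] with t h2 h3
    exact rho_lt_one h2 h3
  constructor
  · -- special implies the ratio tends to 1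
    intro h
    have hnn1 : ∀ᶠ t in l, 0 ≤ (1/2 : ℝ) * Real.log ((1 + R1 a γ t) / (1 - R1 a γ t)) := by
      filter_upwards [hR1lt] with t h1
      have hle : (1:ℝ) ≤ (1 + R1 a γ t) / (1 - R1 a γ t) := by
        rw [le_div_iff₀ (by linarith)]
        linarith [hR1nn t]
      exact mul_nonneg (by norm_num) (Real.log_nonneg hle)
    have hnn2 : ∀ᶠ t in l, 0 ≤ (1/2 : ℝ) * Real.log ((1 + R2 a γ t) / (1 - R2 a γ t)) := by
      filter_upwards [hR2lt] with t h1
      have hle : (1:ℝ) ≤ (1 + R2 a γ t) / (1 - R2 a γ t) := by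
        rw [le_div_iff₀ (by linarith)]
        linarith [hR2nn t]
      exact mul_nonneg (by norm_num) (Real.log_nonneg hle)
    have hf1 : Tendsto (fun t => (1/2:ℝ) * Real.log ((1 + R1 a γ t) / (1 - R1 a γ t)))
        l (nhds 0) :=
      tendsto_of_tendsto_of_tendsto_of_le_of_le' tendsto_const_nhds h hnn1
        (Eventually.of_forall fun t => le_max_left _ _)
    have hf2 : Tendsto (fun t => (1/2:ℝ) * Real.log ((1 + R2 a γ t) / (1 - R2 a γ t)))
        l (nhds 0) :=
      tendsto_of_tendsto_of_tendsto_of_le_of_le' tendsto_const_nhds h hnn2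
        (Eventually.of_forall fun t => le_max_right _ _)
    have hρ1 : Tendsto (R1 a γ) l (nhds 0) :=
      tendsto_rho_aux (by filter_upwards [hR1lt] with t h1; exact ⟨hR1nn t, h1⟩) hf1
    have hρ2 : Tendsto (R2 a γ) l (nhds 0) :=
      tendsto_rho_aux (by filter_upwards [hR2lt] with t h1; exact ⟨hR2nn t, h1⟩) hf2
    have hsum : Tendsto (fun t => R1 a γ t + R2 a γ t) l (nhds 0) := by
      simpa using hρ1.add hρ2
    have hsmall : ∀ᶠ t in l, R1 a γ t + R2 a γ t ≤ 1/6 :=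
      hsum.eventually_le_const (by norm_num)
    have hineq : ∀ᶠ t in l, ‖(1 - (γ t).2) / (1 - (γ t).1) - 1‖
        ≤ 4 * (R1 a γ t + R2 a γ t) := by
      filter_upwards [hz, hw, hpd, hsmall] with t h1 h2 h3 h4
      exact main_ineq a.re h0a h1a (γ t).1 (γ t).2 (a * (γ t).1 + (1 - a) * (γ t).2)
        h1 h2 h3 (hpform t) h4
    rw [tendsto_iff_norm_sub_tendsto_zero]
    have h4s : Tendsto (fun t => 4 * (R1 a γ t + R2 a γ t)) l (nhds 0) := by
      simpa using hsum.const_mul (4:ℝ)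
    refine tendsto_of_tendsto_of_tendsto_of_le_of_le' tendsto_const_nhds h4s
      (Eventually.of_forall fun t => norm_nonneg _) ?_
    filter_upwards [hineq] with t ht
    simpa using ht
  · -- ratio tends to 1 implies special
    intro h
    obtain ⟨M, hM⟩ := hres.2
    have habs : Tendsto (fun t => ‖(1 - (γ t).2) / (1 - (γ t).1) - 1‖)
        l (nhds 0) := by
      have := tendsto_iff_norm_sub_tendsto_zero.mp h
      simpa using this
    have hub : ∀ᶠ t in l,
        R1 a γ t ≤ (max M 1) * ‖(1 - (γ t).2) / (1 - (γ t).1) - 1‖ ∧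
        R2 a γ t ≤ (max M 1) * ‖(1 - (γ t).2) / (1 - (γ t).1) - 1‖ := by
      filter_upwards [hz, hw, hpd, hM] with t h1 h2 h3 h4
      obtain ⟨e1, e2⟩ := rho_le a.re h0a h1a (γ t).1 (γ t).2
        (a * (γ t).1 + (1 - a) * (γ t).2) h1 h2 h3 (hpform t)
      have hd : 0 < 1 - ‖(γ t).1‖ := by linarith
      have hz1 : (1:ℂ) - (γ t).1 ≠ 0 := by
        intro hc
        have hone : (γ t).1 = 1 := by linear_combination -hc
        rw [hone] at h1
        simp at h1
      have hXeq : ‖(γ t).1 - (γ t).2‖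
          = ‖1 - (γ t).1‖ * ‖(1 - (γ t).2) / (1 - (γ t).1) - 1‖ := by
        rw [← norm_mul]
        congr 1
        field_simp
        ring
      have h5 : ‖1 - (γ t).1‖ ≤ (max M 1) * (1 - ‖(γ t).1‖) := by
        refine le_trans h4 ?_
        have hMle := le_max_left M (1:ℝ)
        nlinarith
      have hkey : ‖(γ t).1 - (γ t).2‖ / (1 - ‖(γ t).1‖)
          ≤ (max M 1) * ‖(1 - (γ t).2) / (1 - (γ t).1) - 1‖ := by
        rw [div_le_iff₀ hd, hXeq]
        nlinarith [norm_nonneg ((1 - (γ t).2) / (1 - (γ t).1) - 1)]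
      exact ⟨e1.trans hkey, e2.trans hkey⟩
    have hub0 : Tendsto
        (fun t => (max M 1) * ‖(1 - (γ t).2) / (1 - (γ t).1) - 1‖) l (nhds 0) := by
      simpa using habs.const_mul (max M 1)
    have hρ1 : Tendsto (R1 a γ) l (nhds 0) :=
      tendsto_of_tendsto_of_tendsto_of_le_of_le' tendsto_const_nhds hub0
        (Eventually.of_forall hR1nn) (hub.mono fun t ht => ht.1)
    have hρ2 : Tendsto (R2 a γ) l (nhds 0) :=
      tendsto_of_tendsto_of_tendsto_of_le_of_le' tendsto_const_nhds hub0
        (Eventually.of_forall hR2nn) (hub.mono fun t ht => ht.2)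
    have hfin := (tendsto_pd_aux hρ1).max (tendsto_pd_aux hρ2)
    simpa using hfin
end

section
/- Let x ∈ ∂Δ², (φ_g, π_g) the g-projection device with π̃_g(z₁,z₂) = z₁, and σ a x-curve written as σ(t) = π_g(σ(t)) + α(t), so α(t) = (0, α₂(t)) with α₂(t) → 0. Then σ is g-special (K_{Δ²}(σ(t), π_g(σ(t))) → 0) if and only if lim_{t→1⁻} |α₂(t)| / (1 − |g(σ₁(t))|) = 0. -/
open Filter Topology
open scoped ENNReal

lemma aux_abs_sub_lt (z w : ℂ) (hz : ‖z‖ < 1) (hw : ‖w‖ < 1) :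
    ‖z - w‖ < ‖1 - (starRingEnd ℂ) z * w‖ := by
  have hzn : Complex.normSq z < 1 := by rw [← Complex.sq_norm]; nlinarith [norm_nonneg z]
  have hwn : Complex.normSq w < 1 := by rw [← Complex.sq_norm]; nlinarith [norm_nonneg w]
  have key : Complex.normSq (1 - (starRingEnd ℂ) z * w) - Complex.normSq (z - w)
      = (1 - Complex.normSq z) * (1 - Complex.normSq w) := by
    simp [Complex.normSq_apply, Complex.sub_re, Complex.sub_im, Complex.mul_re, Complex.mul_im,
      Complex.conj_re, Complex.conj_im, Complex.one_re, Complex.one_im]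
    ring
  have : ‖z - w‖ ^ 2 < ‖1 - (starRingEnd ℂ) z * w‖ ^ 2 := by
    rw [Complex.sq_norm, Complex.sq_norm]; nlinarith
  exact lt_of_pow_lt_pow_left₀ 2 (norm_nonneg _) this

lemma aux_abs_le (z w : ℂ) (hw : ‖w‖ < 1) :
    ‖1 - (starRingEnd ℂ) z * w‖
      ≤ 2 * (1 - ‖w‖) + ‖z - w‖ := by
  have h1 : (1 : ℂ) - (starRingEnd ℂ) z * w
      = (1 - (starRingEnd ℂ) w * w) + ((starRingEnd ℂ) w - (starRingEnd ℂ) z) * w := by ring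
  have h2 : ‖1 - (starRingEnd ℂ) w * w‖ = 1 - ‖w‖ ^ 2 := by
    rw [show (starRingEnd ℂ) w * w = (Complex.normSq w : ℂ) by
      rw [mul_comm, Complex.mul_conj]]
    rw [show (1 : ℂ) - (Complex.normSq w : ℂ) = ((1 - Complex.normSq w : ℝ) : ℂ) by push_cast; ring]
    rw [Complex.norm_real, Real.norm_eq_abs, abs_of_nonneg (by rw [← Complex.sq_norm]; nlinarith [norm_nonneg w]),
      Complex.sq_norm]
  calc ‖1 - (starRingEnd ℂ) z * w‖
      ≤ ‖1 - (starRingEnd ℂ) w * w‖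
        + ‖((starRingEnd ℂ) w - (starRingEnd ℂ) z) * w‖ := by
        rw [h1]; exact norm_add_le _ _
    _ ≤ (1 - ‖w‖ ^ 2) + ‖z - w‖ * 1 := by
        rw [h2, norm_mul,
          show (starRingEnd ℂ) w - (starRingEnd ℂ) z = (starRingEnd ℂ) (w - z) by rw [map_sub],
          Complex.norm_conj, show ‖w - z‖ = ‖z - w‖ from
            norm_sub_rev w z]
        gcongr
    _ ≤ 2 * (1 - ‖w‖) + ‖z - w‖ := by nlinarith [norm_nonneg w]

lemma aux_log_nonneg (ρ : ℝ) (h0 : 0 ≤ ρ) (h1 : ρ < 1) :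
    0 ≤ (1/2) * Real.log ((1 + ρ) / (1 - ρ)) := by
  have : (1:ℝ) ≤ (1 + ρ) / (1 - ρ) := (one_le_div (by linarith)).2 (by linarith)
  have := Real.log_nonneg this
  linarith

lemma aux_exp_bound (ρ : ℝ) (h0 : 0 ≤ ρ) (h1 : ρ < 1) :
    ρ ≤ (Real.exp (2 * ((1/2) * Real.log ((1 + ρ) / (1 - ρ)))) - 1) / 2 := by
  have hpos : (0:ℝ) < (1 + ρ) / (1 - ρ) := div_pos (by linarith) (by linarith)
  rw [show 2 * ((1/2) * Real.log ((1 + ρ) / (1 - ρ))) = Real.log ((1 + ρ) / (1 - ρ)) by ring,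
    Real.exp_log hpos]
  rw [le_div_iff₀ (by norm_num : (0:ℝ) < 2), le_sub_iff_add_le,
    le_div_iff₀ (by linarith : (0:ℝ) < 1 - ρ)]
  nlinarith

lemma aux_q_le (a b D : ℝ) (ha : 0 ≤ a) (hb : 0 < b) (hD : a < D) (hD2 : D ≤ 2*b + a) :
    a / b ≤ 2 * (a / D) / (1 - a / D) := by
  have hDpos : 0 < D := lt_of_le_of_lt ha hD
  have hρ : a / D < 1 := (div_lt_one hDpos).2 hD
  have hρ0 : 0 ≤ a / D := div_nonneg ha hDpos.le
  rw [div_le_div_iff₀ hb (by linarith)]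
  have haeq : a = (a / D) * D := (div_mul_cancel₀ a hDpos.ne').symm
  nlinarith [mul_nonneg hρ0 (sub_nonneg.2 hD2)]

/-- with `π̃_g(z₁,z₂) = z₁` and `α₂(t) = σ₂(t) - g(σ₁(t))`, the
curve `σ` is `g`-special iff `|α₂(t)|/(1 - |g(σ₁(t))|) → 0`. -/
theorem special_iff_alpha_quotient
    (x : ℂ × ℂ) (hx : x ∈ frontier bidisc)
    (g : ℂ → ℂ) (hg : DifferentiableOn ℂ g disc) (hgm : Set.MapsTo g disc disc)
    (hiso : ∀ z ∈ disc, ∀ w ∈ disc, kd (z, g z) (w, g w) = pd z w)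
    (hpass : x ∈ closure ((fun z => (z, g z)) '' disc))
    (σ : ℝ → ℂ × ℂ) (hσ : xcurve σ x)
    (hα : Tendsto (fun t => (σ t).2 - g ((σ t).1)) (nhdsWithin 1 (Set.Iio 1)) (nhds 0)) :
    Tendsto (fun t => kd (σ t) ((σ t).1, g ((σ t).1)))
        (nhdsWithin 1 (Set.Iio 1)) (nhds 0) ↔
      Tendsto (fun t => ‖(σ t).2 - g ((σ t).1)‖ / (1 - ‖g ((σ t).1)‖))
        (nhdsWithin 1 (Set.Iio 1)) (nhds 0) := by
  classical
  set l : Filter ℝ := nhdsWithin 1 (Set.Iio 1) with hldef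
  -- notation
  set A : ℝ → ℝ := fun t => ‖(σ t).2 - g ((σ t).1)‖ with hA
  set B : ℝ → ℝ := fun t => 1 - ‖g ((σ t).1)‖ with hB
  set D : ℝ → ℝ := fun t => ‖1 - (starRingEnd ℂ) ((σ t).2) * g ((σ t).1)‖ with hD
  set R : ℝ → ℝ := fun t =>
    ‖((σ t).2 - g ((σ t).1)) / (1 - (starRingEnd ℂ) ((σ t).2) * g ((σ t).1))‖ with hR
  have hRad : ∀ t, R t = A t / D t := fun t => norm_div _ _
  -- eventual facts
  have hIco : ∀ᶠ t in l, t ∈ Set.Ico (0:ℝ) 1 := by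
    filter_upwards [Ioo_mem_nhdsLT_of_mem (show (1:ℝ) ∈ Set.Ioc 0 1 by norm_num)] with t ht
    exact ⟨ht.1.le, ht.2⟩
  have hfacts : ∀ᶠ t in l, 0 ≤ A t ∧ 0 < B t ∧ B t ≤ D t ∧ D t ≤ 2 * B t + A t ∧ A t < D t := by
    filter_upwards [hIco] with t ht
    have hbd := hσ.2.1 t ht
    have hz2 : ‖(σ t).2‖ < 1 := hbd.2
    have hw : ‖g ((σ t).1)‖ < 1 := hgm hbd.1
    refine ⟨norm_nonneg _, by simpa [hB] using hw, ?_, ?_, ?_⟩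
    · -- B ≤ D
      have h1 : ‖(1 : ℂ)‖ ≤
          ‖1 - (starRingEnd ℂ) ((σ t).2) * g ((σ t).1)‖
            + ‖(starRingEnd ℂ) ((σ t).2) * g ((σ t).1)‖ := by
        calc ‖(1 : ℂ)‖
            = ‖(1 - (starRingEnd ℂ) ((σ t).2) * g ((σ t).1))
              + (starRingEnd ℂ) ((σ t).2) * g ((σ t).1)‖ := by ring_nf
          _ ≤ _ := norm_add_le _ _
      have h2 : ‖(starRingEnd ℂ) ((σ t).2) * g ((σ t).1)‖
          ≤ ‖g ((σ t).1)‖ := by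
        rw [norm_mul, Complex.norm_conj]
        calc ‖(σ t).2‖ * ‖g ((σ t).1)‖
            ≤ 1 * ‖g ((σ t).1)‖ := by
              gcongr
          _ = _ := one_mul _
      simp only [norm_one] at h1
      simp only [hB, hD]
      linarith
    · simpa [hB, hA, hD] using aux_abs_le ((σ t).2) (g ((σ t).1)) hw
    · exact aux_abs_sub_lt _ _ hz2 hw
  have hRle1 : ∀ᶠ t in l, 0 ≤ R t ∧ R t < 1 := by
    filter_upwards [hfacts] with t ht
    have hDpos : 0 < D t := lt_of_le_of_lt ht.1 ht.2.2.2.2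
    rw [hRad]
    exact ⟨div_nonneg ht.1 hDpos.le, (div_lt_one hDpos).2 ht.2.2.2.2⟩
  -- pd in terms of R
  have hpd : ∀ t, pd ((σ t).2) (g ((σ t).1)) = (1/2) * Real.log ((1 + R t) / (1 - R t)) :=
    fun t => rfl
  -- step 1: kd equals pd eventually
  have hkd : ∀ᶠ t in l, kd (σ t) ((σ t).1, g ((σ t).1)) = pd ((σ t).2) (g ((σ t).1)) := by
    filter_upwards [hRle1] with t ht
    have h0 : pd ((σ t).1) ((σ t).1) = 0 := by simp [pd]
    have hp0 : 0 ≤ pd ((σ t).2) (g ((σ t).1)) := by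
      rw [hpd]; exact aux_log_nonneg _ ht.1 ht.2
    simp [kd, h0, max_eq_right hp0]
  constructor
  · intro h
    have hp : Tendsto (fun t => pd ((σ t).2) (g ((σ t).1))) l (nhds 0) :=
      (tendsto_congr' hkd).mp h
    -- p → 0  ⇒  R → 0
    have hupper : Tendsto (fun t =>
        (Real.exp (2 * pd ((σ t).2) (g ((σ t).1))) - 1) / 2) l (nhds 0) := by
      have h1 : Tendsto (fun t => 2 * pd ((σ t).2) (g ((σ t).1))) l (nhds (2 * 0)) :=
        hp.const_mul 2
      have h2 := (Real.continuous_exp.tendsto (2 * 0)).comp h1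
      have h3 := (h2.sub (tendsto_const_nhds (x := (1:ℝ)))).div_const 2
      simpa using h3
    have hRto : Tendsto R l (nhds 0) := by
      apply tendsto_of_tendsto_of_tendsto_of_le_of_le' tendsto_const_nhds hupper
      · filter_upwards [hRle1] with t ht using ht.1
      · filter_upwards [hRle1] with t ht
        have := aux_exp_bound (R t) ht.1 ht.2
        rw [hpd]
        exact this
    -- R → 0  ⇒  A/B → 0
    have hq_upper : Tendsto (fun t => 2 * R t / (1 - R t)) l (nhds 0) := by
      have hden : Tendsto (fun t => 1 - R t) l (nhds ((1:ℝ) - 0)) :=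
        tendsto_const_nhds.sub hRto
      have := (hRto.const_mul 2).div hden (by norm_num)
      simpa only [Pi.div_def, mul_zero, sub_zero, zero_div] using this
    apply tendsto_of_tendsto_of_tendsto_of_le_of_le' tendsto_const_nhds hq_upper
    · filter_upwards [hfacts] with t ht
      exact div_nonneg ht.1 ht.2.1.le
    · filter_upwards [hfacts] with t ht
      have := aux_q_le (A t) (B t) (D t) ht.1 ht.2.1 ht.2.2.2.2 ht.2.2.2.1
      rw [hRad]
      exact this
  · intro h
    -- A/B → 0  ⇒  R → 0
    have hRto : Tendsto R l (nhds 0) := by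
      apply tendsto_of_tendsto_of_tendsto_of_le_of_le' tendsto_const_nhds h
      · filter_upwards [hRle1] with t ht using ht.1
      · filter_upwards [hfacts] with t ht
        have hDpos : 0 < D t := lt_of_le_of_lt ht.1 ht.2.2.2.2
        rw [hRad]
        exact div_le_div_of_nonneg_left ht.1 ht.2.1 ht.2.2.1 |>.trans_eq rfl
    -- R → 0 ⇒ pd → 0
    have hp : Tendsto (fun t => pd ((σ t).2) (g ((σ t).1))) l (nhds 0) := by
      have h1 : Tendsto (fun t => (1 + R t) / (1 - R t)) l (nhds 1) := by
        have hnum : Tendsto (fun t => 1 + R t) l (nhds ((1:ℝ) + 0)) :=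
          tendsto_const_nhds.add hRto
        have hden : Tendsto (fun t => 1 - R t) l (nhds ((1:ℝ) - 0)) :=
          tendsto_const_nhds.sub hRto
        have := hnum.div hden (by norm_num)
        simpa only [Pi.div_def, add_zero, sub_zero, div_one] using this
      have h2 := (Real.continuousAt_log one_ne_zero).tendsto.comp h1
      have h3 := h2.const_mul (1/2 : ℝ)
      simp only [Real.log_one, mul_zero] at h3
      have : (fun t => pd ((σ t).2) (g ((σ t).1)))
          = fun t => (1/2) * Real.log ((1 + R t) / (1 - R t)) := funext hpd
      rw [this]
      exact h3
    exact (tendsto_congr' hkd).mpr hp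
end

section
/- (Well-definedness of the φ_g-boundary dilation coefficient.) Let f ∈ Hol(Δ², Δ), x ∈ ∂Δ² with x₁ = 1, φ_g(z) = (z, g(z)) a complex geodesic through x, and θ ∈ Aut(Δ) with θ(1) = 1. Let ψ_g(z) = (θ(z), g(θ(z))) be the reparametrized geodesic. Then lim_{t→1⁻}[K_{Δ²}(0, φ_g(t)) − ω(0, f(φ_g(t)))] = lim_{t→1⁻}[K_{Δ²}(0, ψ_g(t)) − ω(0, f(ψ_g(t)))]; i.e., the coefficient λ_{φ_g}(f) defined by (1/2) log λ_{φ_g}(f) = lim_{t→1⁻}[K_{Δ²}(0, φ_g(t)) − ω(0, f(φ_g(t)))] is independent of the parametrization of the geodesic. -/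
open Filter Topology
open scoped ENNReal

noncomputable section Helpers
open Complex Set Filter Topology





def rho (z w : ℂ) : ℝ := ‖(z - w) / (1 - (starRingEnd ℂ) z * w)‖

def FF (x : ℝ) : ℝ := (1/2) * Real.log ((1 + x) / (1 - x))

lemma pd_eq (z w : ℂ) : pd z w = FF (rho z w) := rfl

lemma key_identity (z w : ℂ) :
    ‖1 - (starRingEnd ℂ) z * w‖ ^ 2 - ‖z - w‖ ^ 2
      = (1 - ‖z‖ ^ 2) * (1 - ‖w‖ ^ 2) := by
  simp only [Complex.sq_norm, Complex.normSq_apply, Complex.sub_re, Complex.sub_im,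
    Complex.mul_re, Complex.mul_im, Complex.one_re, Complex.one_im,
    RCLike.star_def, Complex.conj_re, Complex.conj_im]
  ring

lemma denom_ne {z w : ℂ} (hz : z ∈ disc) (hw : w ∈ disc) :
    (1 - (starRingEnd ℂ) z * w) ≠ 0 := by
  intro h
  have h1 : ‖(starRingEnd ℂ) z * w‖ < 1 := by
    rw [norm_mul, Complex.norm_conj]
    exact mul_lt_one_of_nonneg_of_lt_one_left (norm_nonneg _) hz hw.le
  have : (starRingEnd ℂ) z * w = 1 := (sub_eq_zero.mp h).symm
  simp [this] at h1

lemma rho_nonneg (z w : ℂ) : 0 ≤ rho z w := norm_nonneg _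

lemma rho_lt_one_s10 {z w : ℂ} (hz : z ∈ disc) (hw : w ∈ disc) : rho z w < 1 := by
  have hd := denom_ne hz hw
  have hdpos : 0 < ‖1 - (starRingEnd ℂ) z * w‖ := norm_pos_iff.mpr hd
  have hid := key_identity z w
  have h1 : (0:ℝ) < (1 - ‖z‖ ^ 2) * (1 - ‖w‖ ^ 2) := by
    have hz1 : ‖z‖ < 1 := hz
    have hw1 : ‖w‖ < 1 := hw
    have e1 : (0:ℝ) < 1 - ‖z‖ ^ 2 := by nlinarith [norm_nonneg z]
    have e2 : (0:ℝ) < 1 - ‖w‖ ^ 2 := by nlinarith [norm_nonneg w]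
    exact mul_pos e1 e2
  have hnum : ‖z - w‖ < ‖1 - (starRingEnd ℂ) z * w‖ := by
    nlinarith [norm_nonneg (z - w)]
  rw [rho, norm_div, div_lt_one hdpos]
  exact hnum

lemma rho_symm (z w : ℂ) : rho z w = rho w z := by
  rw [rho, rho, norm_div, norm_div]
  congr 1
  · rw [← norm_neg]; ring_nf
  · rw [← Complex.norm_conj (1 - (starRingEnd ℂ) z * w)]
    congr 1
    simp [map_mul]
    ring

lemma pd_symm (z w : ℂ) : pd z w = pd w z := by rw [pd_eq, pd_eq, rho_symm]

lemma FF_mono {x y : ℝ} (hx : 0 ≤ x) (hxy : x ≤ y) (hy : y < 1) : FF x ≤ FF y := by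
  have h1x : (0:ℝ) < 1 - x := by linarith
  have h1y : (0:ℝ) < 1 - y := by linarith
  have h2 : (0:ℝ) < (1 + x) / (1 - x) := by positivity
  apply mul_le_mul_of_nonneg_left _ (by norm_num : (0:ℝ) ≤ 1/2)
  apply Real.log_le_log h2
  rw [div_le_div_iff₀ h1x h1y]
  nlinarith

lemma FF_nonneg {x : ℝ} (hx : 0 ≤ x) (hx1 : x < 1) : 0 ≤ FF x := by
  have : FF 0 = 0 := by simp [FF]
  linarith [FF_mono le_rfl hx hx1]

lemma pd_nonneg {z w : ℂ} (hz : z ∈ disc) (hw : w ∈ disc) : 0 ≤ pd z w := by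
  rw [pd_eq]; exact FF_nonneg (rho_nonneg z w) (rho_lt_one_s10 hz hw)

lemma pd_zero_left (u : ℂ) : pd 0 u = FF (‖u‖) := by
  simp [pd_eq, rho, FF]

-- F subtraction identity
lemma FF_sub {x y : ℝ} (hy : 0 ≤ y) (hxy : y ≤ x) (hx : x < 1) :
    FF x - FF y = FF ((x - y) / (1 - x * y)) := by
  have h1x : (0:ℝ) < 1 - x := by linarith
  have h1y : (0:ℝ) < 1 - y := by linarith
  have hxy1 : (0:ℝ) < 1 - x * y := by nlinarith
  have hA : (0:ℝ) < (1 + x) / (1 - x) := div_pos (by linarith) h1x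
  have hB : (0:ℝ) < (1 + y) / (1 - y) := div_pos (by linarith) h1y
  have h1 : 1 - (x - y) / (1 - x * y) = (1 - x) * (1 + y) / (1 - x * y) := by
    field_simp; ring
  have h2 : 1 + (x - y) / (1 - x * y) = (1 + x) * (1 - y) / (1 - x * y) := by
    field_simp; ring
  rw [FF, FF, FF, ← mul_sub, ← Real.log_div (ne_of_gt hA) (ne_of_gt hB), h1, h2]
  congr 2
  have hy1 : (0:ℝ) < 1 + y := by linarith
  field_simp
  try ring

-- the reverse triangle inequality at 0
lemma abs_sub_abs_le (u v : ℂ) (hu : u ∈ disc) (hv : v ∈ disc) :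
    (‖u‖ - ‖v‖) * ‖1 - (starRingEnd ℂ) u * v‖
      ≤ ‖u - v‖ * (1 - ‖u‖ * ‖v‖) := by
  set A := ‖u‖
  set B := ‖v‖
  set N := ‖u - v‖
  set D := ‖1 - (starRingEnd ℂ) u * v‖
  have hA : 0 ≤ A := norm_nonneg u
  have hB : 0 ≤ B := norm_nonneg v
  have hN : 0 ≤ N := norm_nonneg _
  have hD : 0 ≤ D := norm_nonneg _
  have hA1 : A < 1 := hu
  have hB1 : B < 1 := hv
  have hid : D ^ 2 - N ^ 2 = (1 - A ^ 2) * (1 - B ^ 2) := key_identity u v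
  have habs : A - B ≤ N := by
    have h := abs_norm_sub_norm_le u v
    calc A - B ≤ |A - B| := le_abs_self _
    _ ≤ N := h
  have hAB : (0:ℝ) < 1 - A * B := by nlinarith
  have hRHS : 0 ≤ N * (1 - A * B) := mul_nonneg hN hAB.le
  rcases le_or_gt A B with h | h
  · have : (A - B) * D ≤ 0 := mul_nonpos_of_nonpos_of_nonneg (by linarith) hD
    linarith
  · have hD2 : D ^ 2 = N ^ 2 + (1 - A ^ 2) * (1 - B ^ 2) := by linarith
    have e1 : (0:ℝ) ≤ (1 - A ^ 2) * (1 - B ^ 2) := mul_nonneg (by nlinarith) (by nlinarith)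
    have e2 : (A - B) ^ 2 ≤ N ^ 2 := by nlinarith
    have expand : (N * (1 - A * B)) ^ 2 - ((A - B) * D) ^ 2
        = (1 - A ^ 2) * (1 - B ^ 2) * (N ^ 2 - (A - B) ^ 2) := by
      rw [mul_pow, mul_pow, hD2]; ring
    have hsq : ((A - B) * D) ^ 2 ≤ (N * (1 - A * B)) ^ 2 := by
      nlinarith [mul_nonneg e1 (sub_nonneg.mpr e2)]
    have hL0 : 0 ≤ (A - B) * D := mul_nonneg (by linarith) hD
    nlinarith [hsq, hRHS, hL0]

lemma pd_zero_sub_le {u v : ℂ} (hu : u ∈ disc) (hv : v ∈ disc) :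
    pd 0 u - pd 0 v ≤ pd u v := by
  rw [pd_zero_left, pd_zero_left, pd_eq]
  set A := ‖u‖ with hA
  set B := ‖v‖ with hB
  have hA0 : 0 ≤ A := norm_nonneg u
  have hB0 : 0 ≤ B := norm_nonneg v
  have hA1 : A < 1 := hu
  have hB1 : B < 1 := hv
  have hr0 := rho_nonneg u v
  have hr1 := rho_lt_one_s10 hu hv
  rcases le_or_gt A B with h | h
  · have h1 : FF A ≤ FF B := FF_mono hA0 h hB1
    linarith [FF_nonneg hr0 hr1]
  · have hAB : (0:ℝ) < 1 - A * B := by nlinarith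
    have he0 : 0 ≤ (A - B) / (1 - A * B) := div_nonneg (by linarith) hAB.le
    rw [FF_sub hB0 h.le hA1]
    apply FF_mono he0 _ hr1
    -- (A - B)/(1 - A*B) ≤ rho u v
    have hD : 0 < ‖1 - (starRingEnd ℂ) u * v‖ := norm_pos_iff.mpr (denom_ne hu hv)
    rw [rho, norm_div, div_le_div_iff₀ hAB hD]
    have := abs_sub_abs_le u v hu hv
    linarith

lemma abs_pd_zero_sub_le {u v : ℂ} (hu : u ∈ disc) (hv : v ∈ disc) :
    |pd 0 u - pd 0 v| ≤ pd u v := by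
  rw [abs_sub_le_iff]
  refine ⟨pd_zero_sub_le hu hv, ?_⟩
  rw [pd_symm u v]
  exact pd_zero_sub_le hv hu
def mob (a z : ℂ) : ℂ := (z - a) / (1 - (starRingEnd ℂ) a * z)

lemma abs_mob (a z : ℂ) : ‖mob a z‖ = rho a z := by
  rw [mob, rho, norm_div, norm_div]
  congr 1
  exact norm_sub_rev z a

lemma mob_mem_disc {a z : ℂ} (ha : a ∈ disc) (hz : z ∈ disc) : mob a z ∈ disc := by
  show ‖_‖ < 1
  rw [abs_mob]; exact rho_lt_one_s10 ha hz

lemma neg_mem_disc {a : ℂ} (ha : a ∈ disc) : -a ∈ disc := by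
  show ‖-a‖ < 1
  rw [norm_neg]; exact ha

lemma mob_diff {a : ℂ} (ha : a ∈ disc) : DifferentiableOn ℂ (mob a) disc := by
  apply DifferentiableOn.div
  · exact (differentiable_id.sub_const a).differentiableOn
  · exact (differentiable_const (1:ℂ)).differentiableOn.sub
      ((differentiable_id.const_mul _).differentiableOn)
  · exact fun z hz => denom_ne ha hz

lemma mob_inv {a z : ℂ} (ha : a ∈ disc) (hz : z ∈ disc) : mob (-a) (mob a z) = z := by
  have h1 : (1 - (starRingEnd ℂ) a * z) ≠ 0 := denom_ne ha hz
  have h2 : (1:ℂ) - (starRingEnd ℂ) a * a ≠ 0 := denom_ne ha ha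
  have hden : 1 - (starRingEnd ℂ) (-a) * mob a z
      = (1 - (starRingEnd ℂ) a * a) / (1 - (starRingEnd ℂ) a * z) := by
    rw [mob, map_neg, neg_mul, sub_neg_eq_add]
    field_simp
    ring
  have hnum : mob a z - (-a) = z * (1 - (starRingEnd ℂ) a * a) / (1 - (starRingEnd ℂ) a * z) := by
    rw [mob, sub_neg_eq_add]
    rw [div_add' _ _ _ h1]
    congr 1
    ring
  rw [mob, hnum, hden, div_div_div_cancel_right₀ h1, mul_div_assoc, div_self h2, mul_one]

lemma disc_eq_ball : disc = Metric.ball (0:ℂ) 1 := by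
  ext z; simp [disc, Metric.mem_ball, Complex.dist_eq]

lemma schwarz_pick {u : ℂ → ℂ} (hd : DifferentiableOn ℂ u disc)
    (hm : Set.MapsTo u disc disc) {z w : ℂ} (hz : z ∈ disc) (hw : w ∈ disc) :
    rho (u z) (u w) ≤ rho z w := by
  have hmw : mob w z ∈ disc := mob_mem_disc hw hz
  have hmaps1 : Set.MapsTo (mob (-w)) disc disc :=
    fun ζ hζ => mob_mem_disc (neg_mem_disc hw) hζ
  have hmaps3 : Set.MapsTo (mob (u w)) disc disc :=
    fun ζ hζ => mob_mem_disc (hm hw) hζ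
  set k : ℂ → ℂ := fun ζ => mob (u w) (u (mob (-w) ζ)) with hkdef
  have hkd : DifferentiableOn ℂ k disc :=
    ((mob_diff (hm hw)).comp hd hm).comp (mob_diff (neg_mem_disc hw)) hmaps1
  have hkm : Set.MapsTo k disc disc := fun ζ hζ => hmaps3 (hm (hmaps1 hζ))
  have hk0 : k 0 = 0 := by
    have h0 : mob (-w) 0 = w := by
      simp [mob]
    simp only [hkdef, h0]
    simp [mob]
  have hsch := Complex.norm_le_norm_of_mapsTo_ball
    (f := k) (R := 1) (by rwa [← disc_eq_ball]) (((by rwa [← disc_eq_ball]) : Set.MapsTo k (Metric.ball 0 1) (Metric.ball 0 1)).mono_right Metric.ball_subset_closedBall) hk0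
    (z := mob w z) hmw
  have hinv : mob (-w) (mob w z) = z := mob_inv hw hz
  have : ‖mob (u w) (u z)‖ ≤ ‖mob w z‖ := by
    simpa only [hkdef, hinv] using hsch
  rw [abs_mob, abs_mob] at this
  rw [rho_symm (u z) (u w), rho_symm z w]
  exact this

lemma pd_schwarz_pick {u : ℂ → ℂ} (hd : DifferentiableOn ℂ u disc)
    (hm : Set.MapsTo u disc disc) {z w : ℂ} (hz : z ∈ disc) (hw : w ∈ disc) :
    pd (u z) (u w) ≤ pd z w := by
  rw [pd_eq, pd_eq]
  exact FF_mono (rho_nonneg _ _) (schwarz_pick hd hm hz hw) (rho_lt_one_s10 hz hw)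



lemma mem_bidisc {z w : ℂ} (hz : z ∈ disc) (hw : w ∈ disc) : (z, w) ∈ bidisc :=
  Set.mem_prod.mpr ⟨hz, hw⟩

lemma defect_lip (f : ℂ × ℂ → ℂ) (hf : DifferentiableOn ℂ f bidisc)
    (hfm : Set.MapsTo f bidisc disc)
    (g : ℂ → ℂ) (hg : DifferentiableOn ℂ g disc) (hgm : Set.MapsTo g disc disc)
    {z w : ℂ} (hz : z ∈ disc) (hw : w ∈ disc) :
    |(kd 0 (z, g z) - pd 0 (f (z, g z))) - (kd 0 (w, g w) - pd 0 (f (w, g w)))|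
      ≤ 3 * pd z w := by
  have hgz : g z ∈ disc := hgm hz
  have hgw : g w ∈ disc := hgm hw
  have hpg : pd (g z) (g w) ≤ pd z w := pd_schwarz_pick hg hgm hz hw
  -- first coordinate partial map
  have hu1d : DifferentiableOn ℂ (fun ζ => f (ζ, g z)) disc := by
    apply hf.comp (differentiableOn_id.prodMk (differentiableOn_const _))
    exact fun ζ hζ => mem_bidisc hζ hgz
  have hu1m : Set.MapsTo (fun ζ => f (ζ, g z)) disc disc :=
    fun ζ hζ => hfm (mem_bidisc hζ hgz)
  have hu2d : DifferentiableOn ℂ (fun ζ => f (w, ζ)) disc := by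
    apply hf.comp ((differentiableOn_const _).prodMk differentiableOn_id)
    exact fun ζ hζ => mem_bidisc hw hζ
  have hu2m : Set.MapsTo (fun ζ => f (w, ζ)) disc disc :=
    fun ζ hζ => hfm (mem_bidisc hw hζ)
  have hfzz : f (z, g z) ∈ disc := hfm (mem_bidisc hz hgz)
  have hfwz : f (w, g z) ∈ disc := hfm (mem_bidisc hw hgz)
  have hfww : f (w, g w) ∈ disc := hfm (mem_bidisc hw hgw)
  -- bound the kd part
  have hkd : |kd 0 (z, g z) - kd 0 (w, g w)| ≤ pd z w := by
    have h1 : kd 0 (z, g z) = max (pd 0 z) (pd 0 (g z)) := rfl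
    have h2 : kd 0 (w, g w) = max (pd 0 w) (pd 0 (g w)) := rfl
    rw [h1, h2]
    refine (abs_max_sub_max_le_max _ _ _ _).trans (max_le ?_ ?_)
    · exact abs_pd_zero_sub_le hz hw
    · exact (abs_pd_zero_sub_le hgz hgw).trans hpg
  -- bound the pd0 ∘ f part
  have hpf : |pd 0 (f (z, g z)) - pd 0 (f (w, g w))| ≤ 2 * pd z w := by
    have t1 : |pd 0 (f (z, g z)) - pd 0 (f (w, g z))| ≤ pd z w := by
      refine (abs_pd_zero_sub_le hfzz hfwz).trans ?_
      exact pd_schwarz_pick hu1d hu1m hz hw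
    have t2 : |pd 0 (f (w, g z)) - pd 0 (f (w, g w))| ≤ pd z w := by
      refine (abs_pd_zero_sub_le hfwz hfww).trans ?_
      exact (pd_schwarz_pick hu2d hu2m hgz hgw).trans hpg
    calc |pd 0 (f (z, g z)) - pd 0 (f (w, g w))|
        ≤ |pd 0 (f (z, g z)) - pd 0 (f (w, g z))|
          + |pd 0 (f (w, g z)) - pd 0 (f (w, g w))| := abs_sub_le _ _ _
      _ ≤ 2 * pd z w := by linarith
  calc |(kd 0 (z, g z) - pd 0 (f (z, g z))) - (kd 0 (w, g w) - pd 0 (f (w, g w)))|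
      ≤ |kd 0 (z, g z) - kd 0 (w, g w)| + |pd 0 (f (z, g z)) - pd 0 (f (w, g w))| := by
        have := abs_sub (kd 0 (z, g z) - pd 0 (f (z, g z))) (kd 0 (w, g w) - pd 0 (f (w, g w)))
        rw [abs_sub_comm]
        calc |(kd 0 (w, g w) - pd 0 (f (w, g w))) - (kd 0 (z, g z) - pd 0 (f (z, g z)))|
            = |(kd 0 (w, g w) - kd 0 (z, g z)) + (pd 0 (f (z, g z)) - pd 0 (f (w, g w)))| := by
              ring_nf
          _ ≤ |kd 0 (w, g w) - kd 0 (z, g z)| + |pd 0 (f (z, g z)) - pd 0 (f (w, g w))| :=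
              abs_add_le _ _
          _ = |kd 0 (z, g z) - kd 0 (w, g w)| + |pd 0 (f (z, g z)) - pd 0 (f (w, g w))| := by
              rw [abs_sub_comm (kd 0 (w, g w))]
    _ ≤ 3 * pd z w := by linarith
lemma abs_one_sub_lower (x : ℂ) : 1 - ‖x‖ ≤ ‖1 - x‖ := by
  have h := abs_norm_sub_norm_le 1 x
  simp only [norm_one] at h
  calc 1 - ‖x‖ ≤ |1 - ‖x‖| := le_abs_self _
    _ ≤ ‖1 - x‖ := h

lemma one_sub_ne {x : ℂ} (hx : ‖x‖ < 1) : (1:ℂ) - x ≠ 0 := by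
  intro h
  have h0 : ‖1 - x‖ = 0 := by rw [h]; simp
  have h1 := abs_one_sub_lower x
  linarith

lemma theta_asymptotics (b : ℝ) (a : ℂ) (ha : ‖a‖ < 1) (θ : ℂ → ℂ)
    (hθ : ∀ z : ℂ, θ z = Complex.exp (b * Complex.I) * (z - a) / (1 - (starRingEnd ℂ) a * z))
    (hθ1 : θ 1 = 1) :
    ∃ K : ℝ, ∀ t : ℝ, t ∈ Set.Ioo (0:ℝ) 1 →
      ((1 - ‖a‖ ^ 2) * (1 - t) / 8 ≤ 1 - ‖θ (t:ℂ)‖ ∧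
        rho (θ (t:ℂ)) (((θ (t:ℂ)).re : ℂ)) ≤ K * (1 - t)) := by
  set A := ‖a‖ with hA
  have hA0 : 0 ≤ A := norm_nonneg a
  have hA2 : 0 < 1 - A^2 := by nlinarith
  have hA1 : 0 < 1 - A := by nlinarith
  have hA4 : 0 < (1 - A)^4 := by positivity
  refine ⟨8 * |a.im| / (1 - A)^4, ?_⟩
  rintro t ⟨ht0, ht1⟩
  have hs : 0 < 1 - t := by linarith
  have htd : (t:ℂ) ∈ disc := by
    show ‖(t:ℂ)‖ < 1
    rw [Complex.norm_real, Real.norm_eq_abs, abs_of_pos ht0]; exact ht1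
  have hd1 : (1:ℂ) - (starRingEnd ℂ) a * (t:ℂ) ≠ 0 := denom_ne ha htd
  have hd2 : (1:ℂ) - a ≠ 0 := one_sub_ne ha
  set c : ℂ := Complex.exp (↑b * Complex.I) with hc
  have hcabs : ‖c‖ = 1 := by
    rw [hc, Complex.norm_exp]; simp
  have hane : (1:ℂ) - (starRingEnd ℂ) a ≠ 0 := by
    apply one_sub_ne; rw [Complex.norm_conj]; exact ha
  have hcc : c * (1 - a) = 1 - (starRingEnd ℂ) a := by
    have h := hθ 1
    rw [hθ1, mul_one] at h
    rw [eq_comm, div_eq_one_iff_eq hane] at h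
    exact h
  have hθt := hθ (t:ℂ)
  set P := ‖(t:ℂ) - a‖ with hP
  set Q := ‖1 - (starRingEnd ℂ) a * (t:ℂ)‖ with hQ
  have hP0 : 0 ≤ P := norm_nonneg _
  have hQ0 : 0 < Q := norm_pos_iff.mpr hd1
  have hθabs : ‖θ ↑t‖ = P / Q := by
    rw [hθt, norm_div, norm_mul, hcabs, one_mul]
  have hθlt : ‖θ ↑t‖ < 1 := by
    have h := rho_lt_one_s10 ha htd
    rw [rho, norm_div, norm_sub_rev] at h
    rw [hθabs]; exact h
  have hPQ : P < Q := by
    rw [hθabs, div_lt_one hQ0] at hθlt; exact hθlt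
  have hQ2 : Q ≤ 2 := by
    have h := norm_sub_le (1:ℂ) ((starRingEnd ℂ) a * (t:ℂ))
    simp only [sub_zero, zero_sub, norm_one, norm_neg] at h
    have h2 : ‖(starRingEnd ℂ) a * (t:ℂ)‖ ≤ A := by
      rw [norm_mul, Complex.norm_conj, Complex.norm_real, Real.norm_eq_abs, abs_of_pos ht0]
      nlinarith
    calc Q ≤ 1 + ‖(starRingEnd ℂ) a * (t:ℂ)‖ := h
      _ ≤ 1 + A := by linarith
      _ ≤ 2 := by linarith
  have hkey : Q^2 - P^2 = (1 - A^2) * (1 - t^2) := by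
    have h := key_identity a (t:ℂ)
    rw [norm_sub_rev a (t:ℂ)] at h
    rw [Complex.norm_real, Real.norm_eq_abs, _root_.abs_of_pos ht0] at h
    exact h
  -- lower bound for 1 - |θ t|
  have h4 : (1 - A^2) * (1 - t) / 4 ≤ Q - P := by nlinarith
  have hlow : (1 - A^2) * (1 - t) / 8 ≤ 1 - ‖θ ↑t‖ := by
    have e : 1 - P / Q = (Q - P) / Q := by field_simp
    have e2 : (Q - P) / 2 ≤ (Q - P) / Q :=
      div_le_div_of_nonneg_left (by linarith) hQ0 hQ2
    rw [hθabs, e]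
    linarith
  refine ⟨hlow, ?_⟩
  have hpos : 0 < 1 - ‖θ ↑t‖ := by
    have : 0 < (1 - A^2) * (1 - t) / 8 := by positivity
    linarith
  -- E1 : exact expression for θ t - 1
  have E1 : θ ↑t - 1 = ((t:ℂ) - 1) * ((1:ℂ) - (starRingEnd ℂ) a * a)
      / ((1 - a) * (1 - (starRingEnd ℂ) a * ↑t)) := by
    rw [hθt, div_sub_one hd1, div_eq_div_iff hd1 (mul_ne_zero hd2 hd1)]
    linear_combination ((t:ℂ) - a) * (1 - (starRingEnd ℂ) a * (t:ℂ)) * hcc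
  set N := Complex.normSq ((1 - a) * (1 - (starRingEnd ℂ) a * ↑t)) with hN
  have hN0 : 0 < N := Complex.normSq_pos.mpr (mul_ne_zero hd2 hd1)
  have hNlow : (1 - A)^4 ≤ N := by
    rw [hN, Complex.normSq_mul]
    have e1 : (1 - A)^2 ≤ Complex.normSq (1 - a) := by
      rw [← Complex.sq_norm]
      exact pow_le_pow_left₀ hA1.le (abs_one_sub_lower a) 2
    have e2 : (1 - A)^2 ≤ Complex.normSq (1 - (starRingEnd ℂ) a * ↑t) := by
      rw [← Complex.sq_norm]
      apply pow_le_pow_left₀ hA1.le _ 2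
      have h := abs_one_sub_lower ((starRingEnd ℂ) a * (t:ℂ))
      have h2 : ‖(starRingEnd ℂ) a * (t:ℂ)‖ ≤ A := by
        rw [norm_mul, Complex.norm_conj, Complex.norm_real, Real.norm_eq_abs, abs_of_pos ht0]
        nlinarith
      linarith
    nlinarith [Complex.normSq_nonneg (1 - a), Complex.normSq_nonneg (1 - (starRingEnd ℂ) a * ↑t)]
  have hDim : ((1 - a) * (1 - (starRingEnd ℂ) a * (t:ℂ))).im = (t - 1) * a.im := by
    simp only [Complex.mul_im, Complex.sub_im, Complex.sub_re, Complex.mul_re,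
      Complex.one_im, Complex.one_re, Complex.conj_re, Complex.conj_im,
      Complex.ofReal_re, Complex.ofReal_im]
    ring
  have hXre : (((t:ℂ) - 1) * ((1:ℂ) - (starRingEnd ℂ) a * a))
      = (((t - 1) * (1 - Complex.normSq a) : ℝ) : ℂ) := by
    have h : (starRingEnd ℂ) a * a = ((Complex.normSq a : ℝ) : ℂ) := by
      rw [mul_comm, Complex.mul_conj]
    rw [h]
    push_cast
    ring
  have him : (θ ↑t).im = (1 - t)^2 * (1 - Complex.normSq a) * (-a.im) / N := by
    have e0 : (θ ↑t).im = (θ ↑t - 1).im := by simp [Complex.sub_im]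
    rw [e0, E1, hXre, Complex.div_im, hDim]
    simp only [Complex.ofReal_re, Complex.ofReal_im, zero_mul, zero_div]
    rw [← hN]
    ring
  have hnsq : Complex.normSq a = A^2 := (Complex.sq_norm a).symm
  have him_bound : |(θ ↑t).im| ≤ (1 - t)^2 * ((1 - A^2) * |a.im|) / (1 - A)^4 := by
    have e : |(θ ↑t).im| = (1 - t)^2 * ((1 - A^2) * |a.im|) / N := by
      rw [him, abs_div, _root_.abs_of_pos hN0, abs_mul, abs_mul, abs_neg, hnsq,
        _root_.abs_of_nonneg (sq_nonneg (1 - t)), _root_.abs_of_pos hA2]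
      ring
    rw [e]
    exact div_le_div_of_nonneg_left (by positivity) hA4 hNlow
  -- bound rho
  have hrle : rho (θ ↑t) (((θ ↑t).re : ℂ)) ≤ |(θ ↑t).im| / (1 - ‖θ ↑t‖) := by
    rw [rho, norm_div]
    have hnum : ‖θ ↑t - ((θ ↑t).re : ℂ)‖ = |(θ ↑t).im| := by
      have e : θ ↑t - ((θ ↑t).re : ℂ) = (θ ↑t).im * Complex.I := by
        linear_combination -Complex.re_add_im (θ ↑t)
      rw [e, norm_mul, Complex.norm_I, Complex.norm_real, Real.norm_eq_abs, mul_one]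
    rw [hnum]
    apply div_le_div_of_nonneg_left (abs_nonneg _) hpos
    have h1 : ‖(starRingEnd ℂ) (θ ↑t) * ((θ ↑t).re : ℂ)‖
        ≤ ‖θ ↑t‖ := by
      rw [norm_mul, Complex.norm_conj, Complex.norm_real, Real.norm_eq_abs]
      exact mul_le_of_le_one_right (norm_nonneg _)
        (le_trans (Complex.abs_re_le_norm (θ ↑t)) hθlt.le)
    calc 1 - ‖θ ↑t‖
        ≤ 1 - ‖(starRingEnd ℂ) (θ ↑t) * ((θ ↑t).re : ℂ)‖ := by linarith
      _ ≤ ‖1 - (starRingEnd ℂ) (θ ↑t) * ((θ ↑t).re : ℂ)‖ :=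
          abs_one_sub_lower _
  have hfinal : |(θ ↑t).im| / (1 - ‖θ ↑t‖)
      ≤ ((1 - t)^2 * ((1 - A^2) * |a.im|) / (1 - A)^4) / ((1 - A^2) * (1 - t) / 8) :=
    div_le_div₀ (by positivity) him_bound (by positivity) hlow
  have heq : ((1 - t)^2 * ((1 - A^2) * |a.im|) / (1 - A)^4) / ((1 - A^2) * (1 - t) / 8)
      = 8 * |a.im| / (1 - A)^4 * (1 - t) := by
    field_simp
  calc rho (θ ↑t) (((θ ↑t).re : ℂ)) ≤ _ := hrle
    _ ≤ _ := hfinal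
    _ = _ := heq

end Helpers

/-- the `φ_g`-boundary dilation coefficient of `f` does not depend
on the parametrization of the geodesic: reparametrizing by a boundary-fixing
automorphism `θ` of `Δ` gives the same limit. -/
theorem lamPhi_parametrization_independent
    (f : ℂ × ℂ → ℂ) (hf : DifferentiableOn ℂ f bidisc) (hfm : Set.MapsTo f bidisc disc)
    (g : ℂ → ℂ) (hg : DifferentiableOn ℂ g disc) (hgm : Set.MapsTo g disc disc)
    (hNT : NTlim g 1 1)
    (b : ℝ) (a : ℂ) (ha : ‖a‖ < 1)
    (θ : ℂ → ℂ)
    (hθ : ∀ z : ℂ, θ z = Complex.exp (b * Complex.I) * (z - a) / (1 - (starRingEnd ℂ) a * z))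
    (hθ1 : θ 1 = 1)
    (L : ℝ)
    (hL : Tendsto (fun t : ℝ => kd 0 ((t : ℂ), g (t : ℂ)) - pd 0 (f ((t : ℂ), g (t : ℂ))))
      (nhdsWithin 1 (Set.Iio 1)) (nhds L)) :
    Tendsto (fun t : ℝ => kd 0 (θ (t : ℂ), g (θ (t : ℂ))) - pd 0 (f (θ (t : ℂ), g (θ (t : ℂ)))))
      (nhdsWithin 1 (Set.Iio 1)) (nhds L) := by
  obtain ⟨K, hK⟩ := theta_asymptotics b a ha θ hθ hθ1
  set l := nhdsWithin (1:ℝ) (Set.Iio 1) with hldef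
  have hmem : Set.Ioo (0:ℝ) 1 ∈ l := Ioo_mem_nhdsLT_of_mem ⟨zero_lt_one, le_rfl⟩
  have hA2 : 0 < 1 - ‖a‖ ^ 2 := by nlinarith [norm_nonneg a]
  have hane : (1:ℂ) - (starRingEnd ℂ) a ≠ 0 := by
    apply one_sub_ne; rw [Complex.norm_conj]; exact ha
  -- θ stays in the disc along (0,1)
  have hθdisc : ∀ t : ℝ, t ∈ Set.Ioo (0:ℝ) 1 → θ (t:ℂ) ∈ disc := by
    intro t ht
    have h := (hK t ht).1
    have hs : 0 < 1 - t := by linarith [ht.2]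
    have hp : 0 < (1 - ‖a‖ ^ 2) * (1 - t) / 8 := by positivity
    show ‖θ (t:ℂ)‖ < 1
    linarith
  have hrd : ∀ t : ℝ, t ∈ Set.Ioo (0:ℝ) 1 → (((θ (t:ℂ)).re : ℂ)) ∈ disc := by
    intro t ht
    show ‖_‖ < 1
    rw [Complex.norm_real, Real.norm_eq_abs]
    exact lt_of_le_of_lt (Complex.abs_re_le_norm _) (hθdisc t ht)
  -- θ is continuous at 1 along the radius
  have hcont : ContinuousAt (fun t : ℝ => θ (t:ℂ)) 1 := by
    simp only [hθ]
    apply ContinuousAt.div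
    · fun_prop
    · fun_prop
    · simpa using hane
  have hθtend : Tendsto (fun t : ℝ => θ (t:ℂ)) l (nhds 1) := by
    have h := hcont.tendsto
    have e : θ (((1:ℝ)):ℂ) = 1 := by rw [Complex.ofReal_one, hθ1]
    rw [e] at h
    exact h.mono_left nhdsWithin_le_nhds
  -- the real curve r t = Re θ(t) tends to 1 within Iio 1
  have hrtend : Tendsto (fun t : ℝ => (θ (t:ℂ)).re) l l := by
    rw [hldef, tendsto_nhdsWithin_iff]
    constructor
    · have h := (Complex.continuous_re.tendsto (1:ℂ)).comp hθtend
      rw [Complex.one_re] at h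
      exact h
    · filter_upwards [hmem] with t ht
      exact lt_of_le_of_lt (Complex.re_le_norm _) (hθdisc t ht)
  -- limit along the reparametrized real curve
  have hGr : Tendsto (fun t : ℝ =>
      kd 0 ((((θ (t:ℂ)).re : ℝ) : ℂ), g (((θ (t:ℂ)).re : ℝ) : ℂ))
        - pd 0 (f ((((θ (t:ℂ)).re : ℝ) : ℂ), g (((θ (t:ℂ)).re : ℝ) : ℂ)))) l (nhds L) :=
    hL.comp hrtend
  -- rho between θ(t) and its real part tends to 0
  have hrho : Tendsto (fun t : ℝ => rho (θ (t:ℂ)) (((θ (t:ℂ)).re : ℂ))) l (nhds 0) := by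
    apply squeeze_zero'
    · filter_upwards with t; exact rho_nonneg _ _
    · filter_upwards [hmem] with t ht
      exact (hK t ht).2
    · have h : Tendsto (fun t : ℝ => K * (1 - t)) (nhds 1) (nhds (K * (1 - 1))) := by
        apply Tendsto.const_mul
        exact tendsto_const_nhds.sub tendsto_id
      have h' : Tendsto (fun t : ℝ => K * (1 - t)) l (nhds (K * (1 - 1))) := by
        rw [hldef]
        exact h.mono_left nhdsWithin_le_nhds
      simpa using h'
  have hFFc : ContinuousAt FF 0 := by
    have h1 : ContinuousAt (fun x : ℝ => (1 + x) / (1 - x)) 0 := by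
      apply ContinuousAt.div (by fun_prop) (by fun_prop)
      norm_num
    have h2 : ContinuousAt (fun x : ℝ => Real.log ((1 + x) / (1 - x))) 0 :=
      h1.log (by norm_num)
    exact continuousAt_const.mul h2
  have hpd0 : Tendsto (fun t : ℝ => pd (θ (t:ℂ)) (((θ (t:ℂ)).re : ℂ))) l (nhds 0) := by
    have h := hFFc.tendsto.comp hrho
    have e : FF 0 = 0 := by simp [FF]
    rw [e] at h
    exact h
  -- the difference of defect functions tends to 0
  have hdiff : Tendsto (fun t : ℝ =>
      (kd 0 (θ (t:ℂ), g (θ (t:ℂ))) - pd 0 (f (θ (t:ℂ), g (θ (t:ℂ)))))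
        - (kd 0 ((((θ (t:ℂ)).re : ℝ) : ℂ), g (((θ (t:ℂ)).re : ℝ) : ℂ))
            - pd 0 (f ((((θ (t:ℂ)).re : ℝ) : ℂ), g (((θ (t:ℂ)).re : ℝ) : ℂ))))) l (nhds 0) := by
    apply squeeze_zero_norm' (a := fun t : ℝ => 3 * pd (θ (t:ℂ)) (((θ (t:ℂ)).re : ℂ)))
    · filter_upwards [hmem] with t ht
      rw [Real.norm_eq_abs]
      exact defect_lip f hf hfm g hg hgm (hθdisc t ht) (hrd t ht)
    · simpa using hpd0.const_mul (3:ℝ)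
  have hsum := hdiff.add hGr
  rw [zero_add] at hsum
  convert hsum using 2 with t
  ring
end
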